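/- arXiv:1908.06563 — 14 statements merged into one kernel-verified Lean document; each statement's English description precedes it below -/
import Mathlib

section
/- Let G be a finite simplicial complex and h : G → {−1, 1}. With L(x,y) = Σ_{u∈G, u⊆x, u⊆y} h(u) and g(x,y) = ω(x)ω(y) Σ_{u∈G, x⊆u, y⊆u} h(u), where ω(x)=(−1)^(|x|−1), the matrix g is the inverse of L: L·g = I. -/
lemma auxPow (s : Finset ℕ) :
    ∑ m ∈ s.powerset, (-1:ℝ)^m.card = if s = ∅ then 1 else 0 := by
  have h := Finset.sum_powerset_neg_one_pow_card (x := s)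
  have h2 : ((∑ m ∈ s.powerset, (-1:ℤ)^m.card : ℤ) : ℝ) = ((if s = ∅ then 1 else 0 : ℤ) : ℝ) :=
    congrArg _ h
  push_cast at h2
  convert h2 using 2 <;> simp

lemma auxSup (u v : Finset ℕ) (huv : u ⊆ v) :
    ∑ z ∈ v.powerset.filter (fun z => u ⊆ z), (-1:ℝ)^z.card
      = if u = v then (-1:ℝ)^u.card else 0 := by
  have hbij : ∑ z ∈ v.powerset.filter (fun z => u ⊆ z), (-1:ℝ)^z.card
      = ∑ w ∈ (v \ u).powerset, (-1:ℝ)^(u ∪ w).card := by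
    refine Finset.sum_nbij' (fun z => z \ u) (fun w => u ∪ w) ?_ ?_ ?_ ?_ ?_
    · intro z hz
      simp only [Finset.mem_filter, Finset.mem_powerset] at hz ⊢
      exact Finset.sdiff_subset_sdiff hz.1 le_rfl
    · intro w hw
      simp only [Finset.mem_filter, Finset.mem_powerset] at hw ⊢
      exact ⟨Finset.union_subset huv (hw.trans (Finset.sdiff_subset)), Finset.subset_union_left⟩
    · intro z hz
      simp only [Finset.mem_filter, Finset.mem_powerset] at hz
      rw [Finset.union_comm]
      exact Finset.sdiff_union_of_subset hz.2
    · intro w hw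
      simp only [Finset.mem_powerset] at hw
      have hd : Disjoint u w := Finset.disjoint_of_subset_right hw Finset.sdiff_disjoint.symm
      rw [Finset.union_sdiff_cancel_left hd]
    · intro z hz
      simp only [Finset.mem_filter, Finset.mem_powerset] at hz
      rw [Finset.union_comm, Finset.sdiff_union_of_subset hz.2]
  rw [hbij]
  have hc : ∀ w ∈ (v \ u).powerset, (-1:ℝ)^(u ∪ w).card = (-1:ℝ)^u.card * (-1:ℝ)^w.card := by
    intro w hw
    simp only [Finset.mem_powerset] at hw
    have hd : Disjoint u w := Finset.disjoint_of_subset_right hw Finset.sdiff_disjoint.symm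
    rw [Finset.card_union_of_disjoint hd, pow_add]
  rw [Finset.sum_congr rfl hc, ← Finset.mul_sum, auxPow]
  rcases eq_or_ne u v with rfl | hne
  · simp
  · have hvu : v \ u ≠ ∅ := by
      rw [← Finset.nonempty_iff_ne_empty]
      exact Finset.sdiff_nonempty.mpr fun hvu => hne (Finset.Subset.antisymm huv hvu)
    simp [hvu, hne]

set_option maxHeartbeats 1000000 in
theorem stmt_4 (G : Finset (Finset ℕ)) (hne : ∀ x ∈ G, x.Nonempty)
    (hclosed : ∀ x ∈ G, ∀ y ⊆ x, y.Nonempty → y ∈ G)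
    (h : Finset ℕ → ℝ) (hval : ∀ x ∈ G, h x = 1 ∨ h x = -1)
    (ω : Finset ℕ → ℝ) (hω : ∀ u, ω u = (-1 : ℝ) ^ (u.card - 1))
    (L g : Matrix {x // x ∈ G} {x // x ∈ G} ℝ)
    (hL : ∀ x y, L x y = ∑ u ∈ G.filter (fun u => u ⊆ x.1 ∧ u ⊆ y.1), h u)
    (hg : ∀ x y, g x y = ω x.1 * ω y.1 *
      ∑ u ∈ G.filter (fun u => x.1 ⊆ u ∧ y.1 ⊆ u), h u) :
    L * g = 1 := by
  classical
  -- ω of a nonempty set is minus (-1)^card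
  have hωn : ∀ u : Finset ℕ, u.Nonempty → ω u = -((-1:ℝ)^u.card) := by
    intro u hu
    have hc : 0 < u.card := Finset.card_pos.mpr hu
    rw [hω]
    conv_rhs => rw [show u.card = (u.card - 1) + 1 from (Nat.succ_pred_eq_of_pos hc).symm]
    rw [pow_succ]; ring
  -- key combinatorial lemma
  have key : ∀ u v : Finset ℕ, u ∈ G → v ∈ G →
      ∑ z ∈ G.filter (fun z => u ⊆ z ∧ z ⊆ v), ω z = if u = v then ω u else 0 := by
    intro u v hu hv
    by_cases huv : u ⊆ v
    · have hset : G.filter (fun z => u ⊆ z ∧ z ⊆ v) = v.powerset.filter (fun z => u ⊆ z) := by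
        ext z
        simp only [Finset.mem_filter, Finset.mem_powerset]
        constructor
        · rintro ⟨_, h1, h2⟩; exact ⟨h2, h1⟩
        · rintro ⟨h2, h1⟩
          exact ⟨hclosed v hv z h2 ((hne u hu).mono h1), h1, h2⟩
      rw [hset]
      have hterm : ∀ z ∈ v.powerset.filter (fun z => u ⊆ z), ω z = -((-1:ℝ)^z.card) := by
        intro z hz
        simp only [Finset.mem_filter, Finset.mem_powerset] at hz
        exact hωn z ((hne u hu).mono hz.2)
      rw [Finset.sum_congr rfl hterm, Finset.sum_neg_distrib, auxSup u v huv]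
      rw [hωn u (hne u hu)]
      split_ifs <;> ring
    · have hempty : G.filter (fun z => u ⊆ z ∧ z ⊆ v) = ∅ := by
        apply Finset.filter_eq_empty_iff.mpr
        intro z _ hz
        exact huv (hz.1.trans hz.2)
      have hne' : u ≠ v := fun hh => huv (hh ▸ Finset.Subset.refl u)
      rw [hempty]; simp [hne']
  ext x y
  rw [Matrix.mul_apply, Matrix.one_apply]
  simp only [hL, hg]
  have hxy : (if x = y then (1:ℝ) else 0) = (if x.1 = y.1 then 1 else 0) := by
    exact if_congr Subtype.ext_iff rfl rfl
  rw [hxy]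
  rw [Finset.sum_coe_sort G (fun z => (∑ u ∈ G.filter (fun u => u ⊆ x.1 ∧ u ⊆ z), h u) *
    (ω z * ω y.1 * ∑ v ∈ G.filter (fun v => z ⊆ v ∧ y.1 ⊆ v), h v))]
  -- expand into triple sum
  have step1 : ∀ z ∈ G, (∑ u ∈ G.filter (fun u => u ⊆ x.1 ∧ u ⊆ z), h u) *
      (ω z * ω y.1 * ∑ v ∈ G.filter (fun v => z ⊆ v ∧ y.1 ⊆ v), h v)
      = ∑ u ∈ G, ∑ v ∈ G, (if u ⊆ x.1 ∧ u ⊆ z then h u else 0) *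
        (ω z * ω y.1 * (if z ⊆ v ∧ y.1 ⊆ v then h v else 0)) := by
    intro z hz
    rw [Finset.sum_filter, Finset.sum_filter, Finset.sum_mul]
    refine Finset.sum_congr rfl fun u hu => ?_
    simp only [Finset.mul_sum]
  rw [Finset.sum_congr rfl step1, Finset.sum_comm]
  -- compute inner double sum for each u
  have step2 : ∀ u ∈ G, ∑ z ∈ G, ∑ v ∈ G, (if u ⊆ x.1 ∧ u ⊆ z then h u else 0) *
      (ω z * ω y.1 * (if z ⊆ v ∧ y.1 ⊆ v then h v else 0))
      = if u ⊆ x.1 ∧ y.1 ⊆ u then ω y.1 * ω u else 0 := by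
    intro u hu
    rw [Finset.sum_comm]
    have inner : ∀ v ∈ G, ∑ z ∈ G, (if u ⊆ x.1 ∧ u ⊆ z then h u else 0) *
        (ω z * ω y.1 * (if z ⊆ v ∧ y.1 ⊆ v then h v else 0))
        = if u = v ∧ u ⊆ x.1 ∧ y.1 ⊆ v then h u * h v * ω y.1 * ω u else 0 := by
      intro v hv
      by_cases hux : u ⊆ x.1
      · by_cases hyv : y.1 ⊆ v
        · have termeq : ∀ z ∈ G, (if u ⊆ x.1 ∧ u ⊆ z then h u else 0) *
              (ω z * ω y.1 * (if z ⊆ v ∧ y.1 ⊆ v then h v else 0))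
              = (if u ⊆ z ∧ z ⊆ v then ω z else 0) * (h u * h v * ω y.1) := by
            intro z _
            by_cases h1 : u ⊆ z <;> by_cases h2 : z ⊆ v <;>
              simp [h1, h2, hux, hyv] <;> ring
          rw [Finset.sum_congr rfl termeq, ← Finset.sum_mul, ← Finset.sum_filter,
            key u v hu hv]
          by_cases huv : u = v
          · rw [if_pos huv, if_pos ⟨huv, hux, hyv⟩]; ring
          · rw [if_neg huv, if_neg (fun hc => huv hc.1), zero_mul]
        · have : ∀ z ∈ G, (if u ⊆ x.1 ∧ u ⊆ z then h u else 0) *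
              (ω z * ω y.1 * (if z ⊆ v ∧ y.1 ⊆ v then h v else 0)) = 0 := by
            intro z _; simp [hyv]
          rw [Finset.sum_congr rfl this, Finset.sum_const_zero]
          simp [hyv]
      · have : ∀ z ∈ G, (if u ⊆ x.1 ∧ u ⊆ z then h u else 0) *
            (ω z * ω y.1 * (if z ⊆ v ∧ y.1 ⊆ v then h v else 0)) = 0 := by
          intro z _; simp [hux]
        rw [Finset.sum_congr rfl this, Finset.sum_const_zero]
        simp [hux]
    rw [Finset.sum_congr rfl inner]
    have split : ∀ v, (if u = v ∧ u ⊆ x.1 ∧ y.1 ⊆ v then h u * h v * ω y.1 * ω u else 0)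
        = if u = v then (if u ⊆ x.1 ∧ y.1 ⊆ v then h u * h v * ω y.1 * ω u else 0) else 0 := by
      intro v; by_cases h1 : u = v <;> simp [h1]
    simp only [split]
    rw [Finset.sum_ite_eq G u
      (fun v => if u ⊆ x.1 ∧ y.1 ⊆ v then h u * h v * ω y.1 * ω u else 0)]
    have hsq : h u * h u = 1 := by rcases hval u hu with h1 | h1 <;> rw [h1] <;> norm_num
    simp only [hu, if_true]
    split_ifs with hc
    · rw [show h u * h u * ω y.1 * ω u = (h u * h u) * (ω y.1 * ω u) by ring, hsq, one_mul]
    · rfl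
  rw [Finset.sum_congr rfl step2]
  -- collapse the last sum using key again
  have last : ∑ u ∈ G, (if u ⊆ x.1 ∧ y.1 ⊆ u then ω y.1 * ω u else 0)
      = ω y.1 * ∑ u ∈ G.filter (fun u => y.1 ⊆ u ∧ u ⊆ x.1), ω u := by
    rw [Finset.mul_sum, Finset.sum_filter]
    refine Finset.sum_congr rfl fun u _ => ?_
    by_cases h1 : y.1 ⊆ u <;> by_cases h2 : u ⊆ x.1 <;> simp [h1, h2, and_comm]
  rw [last, key y.1 x.1 y.2 x.2]
  have hωsq : ω y.1 * ω y.1 = 1 := by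
    rw [hω, ← pow_add]
    exact Even.neg_one_pow ⟨y.1.card - 1, rfl⟩
  rcases eq_or_ne x.1 y.1 with he | he
  · rw [if_pos he.symm, if_pos he, hωsq]
  · rw [if_neg (Ne.symm he), if_neg he, mul_zero]
end

section
/- Let G be a finite set of finite nonempty sets and h : G → ℝ. Define L(x,y) = Σ_{u∈G, u⊆x, u⊆y} h(u). Then det(L) = Π_{x∈G} h(x). -/
open Finset Matrix

theorem stmt_5 (G : Finset (Finset ℕ)) (hne : ∀ x ∈ G, x.Nonempty)
    (h : Finset ℕ → ℝ)
    (L : Matrix {x // x ∈ G} {x // x ∈ G} ℝ)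
    (hL : ∀ x y, L x y = ∑ u ∈ G.filter (fun u => u ⊆ x.1 ∧ u ⊆ y.1), h u) :
    L.det = ∏ x ∈ G, h x := by
  classical
  set A : Matrix {x // x ∈ G} {x // x ∈ G} ℝ :=
    Matrix.of (fun x u => if u.1 ⊆ x.1 then 1 else 0) with hA
  set D : Matrix {x // x ∈ G} {x // x ∈ G} ℝ :=
    Matrix.diagonal (fun u => h u.1) with hD
  have hLeq : L = A * D * Aᵀ := by
    ext x y
    rw [hL, Finset.sum_filter, ← Finset.sum_attach G
      (fun u => if u ⊆ x.1 ∧ u ⊆ y.1 then h u else 0)]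
    rw [Matrix.mul_apply, ← Finset.univ_eq_attach]
    refine Finset.sum_congr rfl fun u _ => ?_
    rw [Matrix.mul_diagonal, Matrix.transpose_apply]
    simp only [hA, Matrix.of_apply]
    by_cases h1 : u.1 ⊆ x.1 <;> by_cases h2 : u.1 ⊆ y.1 <;> simp [h1, h2]
  have hdetA : A.det = 1 := by
    let e : {x // x ∈ G} ≃ {c : Colex (Finset ℕ) // ofColex c ∈ G} :=
      { toFun := fun x => ⟨toColex x.1, x.2⟩
        invFun := fun c => ⟨ofColex c.1, c.2⟩
        left_inv := fun x => rfl
        right_inv := fun c => rfl }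
    letI : Fintype {c : Colex (Finset ℕ) // ofColex c ∈ G} := Fintype.ofEquiv _ e
    rw [← Matrix.det_submatrix_equiv_self e.symm A]
    have htri : (A.submatrix e.symm e.symm).BlockTriangular OrderDual.toDual := by
      intro i j hij
      simp only [Matrix.submatrix_apply, hA, Matrix.of_apply]
      rw [if_neg]
      intro hsub
      have hle : j ≤ i := Subtype.coe_le_coe.mp
        (Finset.Colex.toColex_le_toColex_of_subset hsub)
      exact absurd hle (not_le.mpr hij)
    rw [Matrix.det_of_lowerTriangular _ htri]
    simp [hA]
  have hdetD : D.det = ∏ x ∈ G, h x := by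
    rw [hD, Matrix.det_diagonal, Finset.univ_eq_attach, Finset.prod_attach G h]
  rw [hLeq, Matrix.det_mul, Matrix.det_mul, Matrix.det_transpose, hdetA, hdetD,
    one_mul, mul_one]
end

section
/- Let G be a finite set of finite nonempty sets and h : G → ℝ. Define L^{++}(x,y) = Σ_{u∈G, x⊆u, y⊆u} h(u). Then det(L^{++}) = Π_{x∈G} h(x). -/
theorem stmt_6 (G : Finset (Finset ℕ)) (hne : ∀ x ∈ G, x.Nonempty)
    (h : Finset ℕ → ℝ)
    (Lpp : Matrix {x // x ∈ G} {x // x ∈ G} ℝ)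
    (hLpp : ∀ x y, Lpp x y = ∑ u ∈ G.filter (fun u => x.1 ⊆ u ∧ y.1 ⊆ u), h u) :
    Lpp.det = ∏ x ∈ G, h x := by
  classical
  set M : Matrix {x // x ∈ G} {x // x ∈ G} ℝ :=
    fun x u => if x.1 ⊆ u.1 then 1 else 0 with hM
  have hfact : Lpp = M * Matrix.diagonal (fun u => h u.1) * M.transpose := by
    ext x y
    rw [hLpp]
    simp only [Matrix.mul_apply, Matrix.diagonal_apply, Matrix.transpose_apply]
    simp only [hM,
      mul_ite, mul_zero, mul_one, ite_mul, zero_mul, one_mul,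
      Finset.sum_ite_eq', Finset.mem_univ, if_true]
    rw [Finset.sum_filter, ← Finset.sum_coe_sort G]
    apply Finset.sum_congr rfl
    intro u _
    by_cases h1 : x.1 ⊆ u.1 <;> by_cases h2 : y.1 ⊆ u.1 <;> simp [h1, h2]
  have hBT : M.BlockTriangular (fun x => x.1.card) := by
    intro x u hlt
    simp only [hM]
    rw [if_neg]
    intro hsub
    exact absurd (Finset.card_le_card hsub) (not_le.mpr hlt)
  have hdiag : ∀ x, M x x = 1 := by
    intro x; simp [hM]
  have hdetM : M.det = 1 := by
    rw [hBT.det]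
    apply Finset.prod_eq_one
    intro a _
    have : M.toSquareBlock (fun x => x.1.card) a = 1 := by
      ext i j
      simp only [Matrix.toSquareBlock_def, Matrix.of_apply, Matrix.one_apply]
      simp only [hM]
      by_cases hij : i = j
      · subst hij; simp
      · have hne' : (i.1.1 : Finset ℕ) ≠ j.1.1 := fun hh => hij (Subtype.ext (Subtype.ext hh))
        rw [if_neg, if_neg hij]
        intro hsub
        exact hne' (Finset.eq_of_subset_of_card_le hsub (le_of_eq (j.2.trans i.2.symm)))
    rw [this, Matrix.det_one]
  rw [hfact, Matrix.det_mul, Matrix.det_mul, Matrix.det_transpose, hdetM,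
    Matrix.det_diagonal, one_mul, mul_one]
  exact (Finset.prod_coe_sort G h)
end

section
/- Let G be a finite set of finite nonempty sets and h : G → {−1,1}. Then the matrix L(x,y) = Σ_{u∈G, u⊆x, u⊆y} h(u) has determinant in {−1,1} (L is unimodular). -/
open Matrix Finset

theorem stmt_7 (G : Finset (Finset ℕ)) (hne : ∀ x ∈ G, x.Nonempty)
    (h : Finset ℕ → ℝ) (hval : ∀ x ∈ G, h x = 1 ∨ h x = -1)
    (L : Matrix {x // x ∈ G} {x // x ∈ G} ℝ)
    (hL : ∀ x y, L x y = ∑ u ∈ G.filter (fun u => u ⊆ x.1 ∧ u ⊆ y.1), h u) :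
    L.det = 1 ∨ L.det = -1 := by
  classical
  set A : Matrix {x // x ∈ G} {x // x ∈ G} ℝ :=
    fun x u => if u.1 ⊆ x.1 then 1 else 0 with hA
  have hdec : L = A * Matrix.diagonal (fun u => h u.1) * Aᵀ := by
    ext x y
    rw [hL]
    rw [Matrix.mul_apply]
    have : ∀ u : {x // x ∈ G}, (A * Matrix.diagonal (fun u : {x // x ∈ G} => h u.1)) x u * Aᵀ u y
        = if u.1 ⊆ x.1 ∧ u.1 ⊆ y.1 then h u.1 else 0 := by
      intro u
      rw [Matrix.mul_diagonal, Matrix.transpose_apply]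
      simp only [hA]
      by_cases h1 : u.1 ⊆ x.1 <;> by_cases h2 : u.1 ⊆ y.1 <;> simp [h1, h2]
    simp_rw [this]
    rw [Finset.sum_filter, ← Finset.sum_coe_sort G]
  have hbt : (Aᵀ).BlockTriangular (fun x => x.1.card) := by
    intro i j hij
    simp only [Matrix.transpose_apply]
    simp only [hA]
    rw [if_neg]
    intro hsub
    exact absurd (Finset.card_le_card hsub) (not_le.mpr hij)
  have hdetAT : (Aᵀ).det = 1 := by
    rw [hbt.det]
    apply Finset.prod_eq_one
    intro k _
    have : (Aᵀ).toSquareBlock (fun x => x.1.card) k = 1 := by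
      ext i j
      simp only [Matrix.toSquareBlock_def, Matrix.of_apply, Matrix.transpose_apply,
        Matrix.one_apply]
      simp only [hA]
      have hik : i.1.1.card = k := i.2
      have hjk : j.1.1.card = k := j.2
      by_cases hij : i = j
      · simp [hij]
      · rw [if_neg hij, if_neg]
        intro hsub
        apply hij
        have := Finset.eq_of_subset_of_card_le hsub (by rw [hik, hjk])
        exact Subtype.ext (Subtype.ext this)
    rw [this, Matrix.det_one]
  have hdetA : A.det = 1 := by rw [← Matrix.det_transpose]; exact hdetAT
  have hdetL : L.det = ∏ u : {x // x ∈ G}, h u.1 := by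
    rw [hdec, Matrix.det_mul, Matrix.det_mul, hdetA, hdetAT, Matrix.det_diagonal]
    ring
  rw [hdetL, ← mul_self_eq_one_iff, ← Finset.prod_mul_distrib]
  apply Finset.prod_eq_one
  intro u _
  rcases hval u.1 u.2 with hu | hu <;> rw [hu] <;> norm_num
end

section
/- Let G be a finite set of finite nonempty sets and h : G → ℝ with h(x) ≠ 0 for all x. The number of negative eigenvalues of the symmetric matrix L(x,y) = Σ_{u∈G, u⊆x, u⊆y} h(u) equals the number of x ∈ G with h(x) < 0. -/
open Matrix Finset

lemma neg_count_le {n : Type*} [Fintype n] [DecidableEq n] (d e : n → ℝ)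
    (f : (n → ℝ) →ₗ[ℝ] (n → ℝ))
    (hq : ∀ v, ∑ i, d i * (f v i)^2 = ∑ i, e i * (v i)^2) :
    (univ.filter fun i => e i < 0).card ≤ (univ.filter fun i => d i < 0).card := by
  classical
  set S := univ.filter fun i => e i < 0 with hS
  set T := univ.filter fun i => d i < 0 with hT
  let g : (↥S → ℝ) →ₗ[ℝ] (↥T → ℝ) :=
    (LinearMap.funLeft ℝ ℝ (Subtype.val)).comp
      (f.comp (Function.ExtendByZero.linearMap ℝ (Subtype.val)))
  have hg : Function.Injective g := by
    rw [injective_iff_map_eq_zero]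
    intro w hw
    set v : n → ℝ := Function.extend Subtype.val w 0 with hv
    have hvS : ∀ i (hi : i ∈ S), v i = w ⟨i, hi⟩ := fun i hi => by
      simpa [hv] using Function.Injective.extend_apply Subtype.val_injective w 0 ⟨i, hi⟩
    have hvnS : ∀ i, i ∉ S → v i = 0 := by
      intro i hi
      rw [hv, Function.extend_apply']
      · rfl
      · rintro ⟨a, rfl⟩; exact hi a.2
    have hfvT : ∀ i, i ∈ T → f v i = 0 := by
      intro i hi
      have := congrFun hw ⟨i, hi⟩
      exact this
    have h1 : 0 ≤ ∑ i, d i * (f v i)^2 := by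
      apply Finset.sum_nonneg
      intro i _
      by_cases hi : i ∈ T
      · simp [hfvT i hi]
      · have hd : 0 ≤ d i := le_of_not_gt (by simpa [hT] using hi)
        exact mul_nonneg hd (sq_nonneg _)
    have h2 : ∀ i ∈ (univ : Finset n), e i * (v i)^2 ≤ 0 := by
      intro i _
      by_cases hi : i ∈ S
      · have : e i < 0 := by simpa [hS] using hi
        nlinarith [sq_nonneg (v i)]
      · simp [hvnS i hi]
    have h3 : ∑ i, e i * (v i)^2 = 0 :=
      le_antisymm (Finset.sum_nonpos h2) (by rw [← hq]; exact h1)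
    have h4 := (Finset.sum_eq_zero_iff_of_nonpos h2).mp h3
    funext a
    have he : e a.1 < 0 := by
      exact (Finset.mem_filter.mp a.2).2
    have := h4 a.1 (mem_univ _)
    have hva : v a.1 = 0 := by
      rcases mul_eq_zero.mp this with hh | hh
      · exact absurd hh he.ne
      · exact pow_eq_zero_iff (by norm_num) |>.mp hh
    rw [hvS a.1 a.2] at hva
    simpa using hva
  have hle := LinearMap.finrank_le_finrank_of_injective hg
  simpa [Module.finrank_fintype_fun_eq_card, Fintype.card_coe] using hle

lemma quad_eq {n : Type*} [Fintype n] [DecidableEq n] (d : n → ℝ) (M : Matrix n n ℝ) (v : n → ℝ) :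
    v ⬝ᵥ (M * Matrix.diagonal d * Mᵀ).mulVec v = ∑ i, d i * (Mᵀ.mulVec v i)^2 := by
  rw [mul_assoc, ← mulVec_mulVec, dotProduct_mulVec, ← mulVec_transpose, ← mulVec_mulVec,
    ]
  simp only [dotProduct, mulVec_diagonal]
  exact Finset.sum_congr rfl fun i _ => by ring
  

theorem stmt_8 (G : Finset (Finset ℕ)) (hne : ∀ x ∈ G, x.Nonempty)
    (h : Finset ℕ → ℝ) (hz : ∀ x ∈ G, h x ≠ 0)
    (L : Matrix {x // x ∈ G} {x // x ∈ G} ℝ)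
    (hL : ∀ x y, L x y = ∑ u ∈ G.filter (fun u => u ⊆ x.1 ∧ u ⊆ y.1), h u)
    (hHerm : L.IsHermitian) :
    (Finset.univ.filter (fun i => hHerm.eigenvalues i < 0)).card
      = (G.filter (fun x => h x < 0)).card := by
  classical
  set M₀ : Matrix {x // x ∈ G} {x // x ∈ G} ℝ :=
    Matrix.of fun x u => if u.1 ⊆ x.1 then 1 else 0 with hM₀
  set d₀ : {x // x ∈ G} → ℝ := fun u => h u.1 with hd₀
  have hLdecomp : L = M₀ * Matrix.diagonal d₀ * M₀ᵀ := by
    ext x y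
    rw [hL]
    rw [Matrix.mul_apply]
    simp only [Matrix.mul_diagonal, Matrix.transpose_apply, hM₀, hd₀, Matrix.of_apply]
    calc ∑ u ∈ G.filter (fun u => u ⊆ x.1 ∧ u ⊆ y.1), h u
        = ∑ a ∈ G, if a ⊆ x.1 ∧ a ⊆ y.1 then h a else 0 := Finset.sum_filter _ _
      _ = ∑ a ∈ G, (if a ⊆ x.1 then (1:ℝ) else 0) * h a * (if a ⊆ y.1 then 1 else 0) := by
          refine Finset.sum_congr rfl fun a _ => ?_
          by_cases h1 : a ⊆ x.1 <;> by_cases h2 : a ⊆ y.1 <;> simp [h1, h2]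
      _ = ∑ u : {x // x ∈ G},
            (if u.1 ⊆ x.1 then (1:ℝ) else 0) * h u.1 * (if u.1 ⊆ y.1 then 1 else 0) :=
          (Finset.sum_coe_sort G _).symm
  have hb : M₀ᵀ.BlockTriangular (fun x => x.1.card) := by
    intro i j hij
    simp only [Matrix.transpose_apply, hM₀, Matrix.of_apply]
    rw [if_neg]
    intro hsub
    exact absurd (Finset.card_le_card hsub) (not_le.mpr hij)
  have hdet : M₀.det = 1 := by
    rw [← Matrix.det_transpose, hb.det, Finset.prod_eq_one]
    intro a _
    have h1 : M₀ᵀ.toSquareBlock (fun x => x.1.card) a = 1 := by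
      ext i j
      simp only [Matrix.toSquareBlock_def, Matrix.transpose_apply, hM₀, Matrix.of_apply,
        Matrix.one_apply]
      by_cases hij : i = j
      · simp [hij]
      · rw [if_neg, if_neg hij]
        intro hsub
        have hc : (j.1.1 : Finset ℕ).card ≤ i.1.1.card := by rw [i.2, j.2]
        exact hij (Subtype.ext (Subtype.ext (Finset.eq_of_subset_of_card_le hsub hc)))
    rw [h1, Matrix.det_one]
  set U : Matrix {x // x ∈ G} {x // x ∈ G} ℝ := (hHerm.eigenvectorUnitary : Matrix {x // x ∈ G} {x // x ∈ G} ℝ) with hUdef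
  have hstar : star U = Uᵀ := by
    ext i j; simp [Matrix.conjTranspose_apply]
  have hU : Uᵀ * U = 1 := by
    rw [← hstar]
    exact Matrix.mem_unitaryGroup_iff'.mp hHerm.eigenvectorUnitary.2
  have hspec : L = U * Matrix.diagonal hHerm.eigenvalues * Uᵀ := by
    rw [← hstar]
    have := hHerm.spectral_theorem
    rw [Unitary.conjStarAlgAut_apply] at this
    convert this using 3 <;> rfl
  have q1 : ∀ v, v ⬝ᵥ L.mulVec v = ∑ u, d₀ u * (M₀ᵀ.mulVec v u)^2 := by
    intro v; conv_lhs => rw [hLdecomp]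
    exact quad_eq d₀ M₀ v
  have q2 : ∀ v, v ⬝ᵥ L.mulVec v = ∑ i, hHerm.eigenvalues i * (Uᵀ.mulVec v i)^2 := by
    intro v; conv_lhs => rw [hspec]
    exact quad_eq _ U v
  have hMinv : M₀ᵀ * (M₀ᵀ)⁻¹ = 1 :=
    Matrix.mul_nonsing_inv _ (by rw [Matrix.det_transpose, hdet]; exact isUnit_one)
  have ineq1 : (univ.filter fun i => hHerm.eigenvalues i < 0).card
      ≤ (univ.filter fun i => d₀ i < 0).card := by
    apply neg_count_le d₀ hHerm.eigenvalues ((M₀ᵀ).mulVecLin ∘ₗ U.mulVecLin)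
    intro v
    simp only [LinearMap.comp_apply, Matrix.mulVecLin_apply]
    rw [← q1 (U.mulVec v), q2 (U.mulVec v), Matrix.mulVec_mulVec, hU, Matrix.one_mulVec]
  have ineq2 : (univ.filter fun i => d₀ i < 0).card
      ≤ (univ.filter fun i => hHerm.eigenvalues i < 0).card := by
    apply neg_count_le hHerm.eigenvalues d₀ (Uᵀ.mulVecLin ∘ₗ ((M₀ᵀ)⁻¹).mulVecLin)
    intro v
    simp only [LinearMap.comp_apply, Matrix.mulVecLin_apply]
    rw [← q2 ((M₀ᵀ)⁻¹.mulVec v), q1 ((M₀ᵀ)⁻¹.mulVec v), Matrix.mulVec_mulVec, hMinv,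
      Matrix.one_mulVec]
  have hcard : (univ.filter fun i : {x // x ∈ G} => d₀ i < 0).card
      = (G.filter fun x => h x < 0).card := by
    apply Finset.card_bij (fun a _ => a.1)
    · intro a ha
      rw [Finset.mem_filter] at ha ⊢
      exact ⟨a.2, ha.2⟩
    · intro a _ b _ hab
      exact Subtype.ext hab
    · intro b hb
      rw [Finset.mem_filter] at hb
      exact ⟨⟨b, hb.1⟩, by simp [hd₀, hb.2], rfl⟩
  rw [← hcard]
  exact le_antisymm ineq1 ineq2
end

section
/- Let G be a finite set of finite nonempty sets and h : G → ℝ with h(x) > 0 for all x ∈ G. Then the symmetric matrix L(x,y) = Σ_{u∈G, u⊆x, u⊆y} h(u) is positive definite. -/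
theorem stmt_9 (G : Finset (Finset ℕ)) (hne : ∀ x ∈ G, x.Nonempty)
    (h : Finset ℕ → ℝ) (hpos : ∀ x ∈ G, 0 < h x)
    (L : Matrix {x // x ∈ G} {x // x ∈ G} ℝ)
    (hL : ∀ x y, L x y = ∑ u ∈ G.filter (fun u => u ⊆ x.1 ∧ u ⊆ y.1), h u) :
    L.PosDef := by
  rw [Matrix.posDef_iff_dotProduct_mulVec]
  constructor
  · ext x y
    simp only [Matrix.conjTranspose_apply, star_trivial, hL]
    apply Finset.sum_congr _ (fun _ _ => rfl)
    apply Finset.filter_congr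
    intro u _
    exact and_comm
  · intro v hv
    have expand : ∀ x y : {x // x ∈ G}, v x * (L x y * v y) =
        ∑ u ∈ G, (if u ⊆ x.1 then v x else 0) * (h u * (if u ⊆ y.1 then v y else 0)) := by
      intro x y
      rw [hL, Finset.sum_filter, Finset.sum_mul, Finset.mul_sum]
      refine Finset.sum_congr rfl fun u _ => ?_
      by_cases hx : u ⊆ x.1 <;> by_cases hy : u ⊆ y.1 <;> simp [hx, hy]
    have key : dotProduct (star v) (L.mulVec v) =
        ∑ u ∈ G, h u * (∑ x : {x // x ∈ G}, if u ⊆ x.1 then v x else 0) ^ 2 := by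
      calc dotProduct (star v) (L.mulVec v)
          = ∑ x : {x // x ∈ G}, ∑ y : {x // x ∈ G}, v x * (L x y * v y) := by
            simp [dotProduct, Matrix.mulVec, Finset.mul_sum]
        _ = ∑ x : {x // x ∈ G}, ∑ y : {x // x ∈ G}, ∑ u ∈ G,
              (if u ⊆ x.1 then v x else 0) * (h u * (if u ⊆ y.1 then v y else 0)) :=
            Finset.sum_congr rfl fun x _ => Finset.sum_congr rfl fun y _ => expand x y
        _ = ∑ x : {x // x ∈ G}, ∑ u ∈ G, ∑ y : {x // x ∈ G},
              (if u ⊆ x.1 then v x else 0) * (h u * (if u ⊆ y.1 then v y else 0)) :=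
            Finset.sum_congr rfl fun x _ => Finset.sum_comm
        _ = ∑ u ∈ G, ∑ x : {x // x ∈ G}, ∑ y : {x // x ∈ G},
              (if u ⊆ x.1 then v x else 0) * (h u * (if u ⊆ y.1 then v y else 0)) :=
            Finset.sum_comm
        _ = ∑ u ∈ G, h u * (∑ x : {x // x ∈ G}, if u ⊆ x.1 then v x else 0) ^ 2 := by
            refine Finset.sum_congr rfl fun u _ => ?_
            rw [pow_two, Finset.sum_mul_sum, Finset.mul_sum]
            refine Finset.sum_congr rfl fun x _ => ?_
            rw [Finset.mul_sum]
            refine Finset.sum_congr rfl fun y _ => ?_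
            ring
    rw [key]
    -- pick a maximal-cardinality element of the support of v
    have hTne : (Finset.univ.filter (fun x : {x // x ∈ G} => v x ≠ 0)).Nonempty := by
      by_contra hc
      apply hv
      funext x
      by_contra hvx
      exact hc ⟨x, Finset.mem_filter.mpr ⟨Finset.mem_univ _, hvx⟩⟩
    obtain ⟨x0, hx0T, hmax⟩ :=
      (Finset.univ.filter (fun x : {x // x ∈ G} => v x ≠ 0)).exists_max_image
        (fun x => x.1.card) hTne
    have hvx0 : v x0 ≠ 0 := (Finset.mem_filter.mp hx0T).2
    have hsum : (∑ x : {x // x ∈ G}, if x0.1 ⊆ x.1 then v x else 0) = v x0 := by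
      rw [Finset.sum_eq_single x0]
      · simp
      · intro x _ hne'
        by_cases hsub : x0.1 ⊆ x.1
        · simp only [hsub, if_true]
          by_contra hvx
          have hxT : x ∈ Finset.univ.filter (fun x : {x // x ∈ G} => v x ≠ 0) :=
            Finset.mem_filter.mpr ⟨Finset.mem_univ _, hvx⟩
          have hcard := hmax x hxT
          have : x0.1 = x.1 := Finset.eq_of_subset_of_card_le hsub hcard
          exact hne' (Subtype.ext this.symm)
        · simp [hsub]
      · intro hx; exact absurd (Finset.mem_univ x0) hx
    apply Finset.sum_pos'
    · intro u _hu
      exact mul_nonneg (hpos u _hu).le (sq_nonneg _)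
    · refine ⟨x0.1, x0.2, ?_⟩
      rw [hsum]
      exact mul_pos (hpos _ x0.2) (pow_two_pos_of_ne_zero hvx0)
end

section
/- Let G be a finite set of finite nonempty sets and h : G → ℝ with h > 0. Then the symmetric matrix L^{++}(x,y) = Σ_{u∈G, x⊆u, y⊆u} h(u) is positive definite. -/
theorem stmt_10 (G : Finset (Finset ℕ)) (hne : ∀ x ∈ G, x.Nonempty)
    (h : Finset ℕ → ℝ) (hpos : ∀ x ∈ G, 0 < h x)
    (Lpp : Matrix {x // x ∈ G} {x // x ∈ G} ℝ)
    (hLpp : ∀ x y, Lpp x y = ∑ u ∈ G.filter (fun u => x.1 ⊆ u ∧ y.1 ⊆ u), h u) :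
    Lpp.PosDef := by
  classical
  rw [Matrix.posDef_iff_dotProduct_mulVec]
  constructor
  · ext i j
    simp only [Matrix.conjTranspose_apply, star_trivial]
    rw [hLpp, hLpp]
    apply Finset.sum_congr _ (fun _ _ => rfl)
    ext u
    simp [and_comm]
  · intro v hv
    set S : Finset ℕ → ℝ :=
      fun u => ∑ x ∈ Finset.univ.filter (fun x : {x // x ∈ G} => (x : Finset ℕ) ⊆ u), v x with hSdef
    have key : dotProduct (star v) (Lpp.mulVec v) = ∑ u ∈ G, h u * S u ^ 2 := by
      simp only [dotProduct, Matrix.mulVec, star_trivial, hLpp, Finset.sum_filter]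
      have inner : ∀ x : {x // x ∈ G},
          (∑ y : {x // x ∈ G}, (∑ u ∈ G, if (x : Finset ℕ) ⊆ u ∧ (y : Finset ℕ) ⊆ u then h u else 0) * v y)
          = ∑ u ∈ G, (if (x : Finset ℕ) ⊆ u then h u * S u else 0) := by
        intro x
        simp only [Finset.sum_mul]
        rw [Finset.sum_comm]
        refine Finset.sum_congr rfl fun u _ => ?_
        by_cases hx : (x : Finset ℕ) ⊆ u
        · simp only [hx, true_and, if_true, hSdef, Finset.sum_filter, Finset.mul_sum]
          refine Finset.sum_congr rfl fun y _ => ?_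
          by_cases hy : (y : Finset ℕ) ⊆ u <;> simp [hy]
        · simp [hx]
      calc (∑ x : {x // x ∈ G}, v x * ∑ y : {x // x ∈ G}, (∑ u ∈ G, if (x : Finset ℕ) ⊆ u ∧ (y : Finset ℕ) ⊆ u then h u else 0) * v y)
          = ∑ x : {x // x ∈ G}, ∑ u ∈ G, (if (x : Finset ℕ) ⊆ u then v x * (h u * S u) else 0) := by
            refine Finset.sum_congr rfl fun x _ => ?_
            rw [inner x, Finset.mul_sum]
            refine Finset.sum_congr rfl fun u _ => ?_
            by_cases hx : (x : Finset ℕ) ⊆ u <;> simp [hx]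
        _ = ∑ u ∈ G, ∑ x : {x // x ∈ G}, (if (x : Finset ℕ) ⊆ u then v x * (h u * S u) else 0) := Finset.sum_comm
        _ = ∑ u ∈ G, h u * S u ^ 2 := by
            refine Finset.sum_congr rfl fun u _ => ?_
            rw [← Finset.sum_filter, ← Finset.sum_mul]
            rw [hSdef]
            ring
    rw [key]
    have hnonneg : ∀ u ∈ G, 0 ≤ h u * S u ^ 2 :=
      fun u hu => mul_nonneg (hpos u hu).le (sq_nonneg _)
    rcases (Finset.sum_nonneg hnonneg).lt_or_eq with hlt | heq
    · exact hlt
    · exfalso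
      have hSz : ∀ u ∈ G, S u = 0 := by
        intro u hu
        have hz := (Finset.sum_eq_zero_iff_of_nonneg hnonneg).mp heq.symm u hu
        rcases mul_eq_zero.mp hz with h1 | h2
        · exact absurd h1 (hpos u hu).ne'
        · exact pow_eq_zero_iff (two_ne_zero) |>.mp h2
      apply hv
      have main : ∀ n : ℕ, ∀ x : {x // x ∈ G}, (x : Finset ℕ).card ≤ n → v x = 0 := by
        intro n
        induction n with
        | zero =>
          intro x hx
          have hc : 0 < (x : Finset ℕ).card := Finset.card_pos.mpr (hne x.1 x.2)
          omega
        | succ n ih =>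
          intro x hx
          have h0 := hSz x.1 x.2
          have h0' : ∑ y ∈ Finset.univ.filter
              (fun y : {x // x ∈ G} => (y : Finset ℕ) ⊆ (x : Finset ℕ)), v y = 0 := h0
          rw [Finset.sum_eq_single x] at h0'
          · exact h0'
          · intro y hy hyx
            have hy' : (y : Finset ℕ) ⊆ (x : Finset ℕ) := (Finset.mem_filter.mp hy).2
            have hss : (y : Finset ℕ) ⊂ (x : Finset ℕ) :=
              ssubset_of_subset_of_ne hy' (fun e => hyx (Subtype.ext e))
            have hcard := Finset.card_lt_card hss
            exact ih y (by omega)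
          · intro hmem
            exact absurd (Finset.mem_filter.mpr ⟨Finset.mem_univ x, (subset_rfl : (x : Finset ℕ) ⊆ (x : Finset ℕ))⟩) hmem
      funext x
      exact main _ x le_rfl
end

section
/- Let G be a finite simplicial complex and h : G → ℝ. With g(x,y) = ω(x)ω(y) Σ_{u∈G, x⊆u, y⊆u} h(u) and ω(x)=(−1)^(|x|−1), the sum of all matrix entries of g equals the total energy: Σ_{x,y∈G} g(x,y) = Σ_{x∈G} h(x). -/
theorem stmt_11 (G : Finset (Finset ℕ)) (hne : ∀ x ∈ G, x.Nonempty)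
    (hclosed : ∀ x ∈ G, ∀ y ⊆ x, y.Nonempty → y ∈ G)
    (h : Finset ℕ → ℝ)
    (ω : Finset ℕ → ℝ) (hω : ∀ u, ω u = (-1 : ℝ) ^ (u.card - 1)) :
    (∑ x ∈ G, ∑ y ∈ G, ω x * ω y * ∑ u ∈ G.filter (fun u => x ⊆ u ∧ y ⊆ u), h u)
      = ∑ x ∈ G, h x := by
  have key : ∀ u ∈ G, (∑ x ∈ G, if x ⊆ u then ω x else 0) = 1 := by
    intro u hu
    rw [← Finset.sum_filter]
    have hfe : G.filter (fun x => x ⊆ u) = u.powerset.filter (fun x => x.Nonempty) := by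
      ext x
      simp only [Finset.mem_filter, Finset.mem_powerset]
      constructor
      · rintro ⟨hx, hxu⟩; exact ⟨hxu, hne x hx⟩
      · rintro ⟨hxu, hxne⟩; exact ⟨hclosed u hu x hxu hxne, hxu⟩
    rw [hfe]
    have h0 : ∑ x ∈ u.powerset, (-1 : ℝ) ^ x.card = 0 := by
      exact_mod_cast congrArg (Int.cast : ℤ → ℝ)
        (Finset.sum_powerset_neg_one_pow_card_of_nonempty (hne u hu))
    have hsplit : u.powerset = insert ∅ (u.powerset.filter (fun x => x.Nonempty)) := by
      ext x
      simp only [Finset.mem_insert, Finset.mem_filter, Finset.mem_powerset,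
        Finset.nonempty_iff_ne_empty]
      by_cases hx : x = ∅ <;> simp [hx]
    rw [hsplit, Finset.sum_insert (by simp)] at h0
    simp only [Finset.card_empty, pow_zero] at h0
    have h1 : ∑ x ∈ u.powerset.filter (fun x => x.Nonempty), (-1 : ℝ) ^ x.card = -1 := by
      linarith
    calc (∑ x ∈ u.powerset.filter (fun x => x.Nonempty), ω x)
        = ∑ x ∈ u.powerset.filter (fun x => x.Nonempty), -((-1 : ℝ) ^ x.card) := by
          apply Finset.sum_congr rfl
          intro x hx
          simp only [Finset.mem_filter] at hx
          rw [hω]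
          obtain ⟨k, hk⟩ := Nat.exists_eq_add_of_lt (Finset.card_pos.mpr hx.2)
          have hc : x.card = k + 1 := by omega
          rw [hc]
          simp [pow_succ]
      _ = 1 := by rw [Finset.sum_neg_distrib, h1]; norm_num
  calc (∑ x ∈ G, ∑ y ∈ G, ω x * ω y * ∑ u ∈ G.filter (fun u => x ⊆ u ∧ y ⊆ u), h u)
      = ∑ x ∈ G, ∑ y ∈ G, ∑ u ∈ G,
          (if x ⊆ u then ω x else 0) * (if y ⊆ u then ω y else 0) * h u := by
        simp_rw [Finset.sum_filter, Finset.mul_sum]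
        refine Finset.sum_congr rfl fun x _ => Finset.sum_congr rfl fun y _ =>
          Finset.sum_congr rfl fun u _ => ?_
        by_cases hx : x ⊆ u <;> by_cases hy : y ⊆ u <;> simp [hx, hy]
    _ = ∑ u ∈ G, ∑ x ∈ G, ∑ y ∈ G,
          (if x ⊆ u then ω x else 0) * (if y ⊆ u then ω y else 0) * h u := by
        exact (Finset.sum_congr rfl fun x _ => Finset.sum_comm).trans Finset.sum_comm
    _ = ∑ u ∈ G, (∑ x ∈ G, if x ⊆ u then ω x else 0) *
          (∑ y ∈ G, if y ⊆ u then ω y else 0) * h u := by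
        refine Finset.sum_congr rfl fun u _ => ?_
        rw [Finset.sum_mul_sum, Finset.sum_mul]
        exact Finset.sum_congr rfl fun x _ => (Finset.sum_mul _ _ _).symm
    _ = ∑ x ∈ G, h x := by
        refine Finset.sum_congr rfl fun u hu => ?_
        rw [key u hu]
        ring
end

section
/- Let G be a finite simplicial complex and h : G → ℝ. With g(x,y) = ω(x)ω(y) Σ_{u∈G, x⊆u, y⊆u} h(u), the super trace equals the total energy: Σ_{x∈G} ω(x) g(x,x) = Σ_{x∈G} h(x). -/
lemma aux_inner (u : Finset ℕ) (hu : u.Nonempty) :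
    ∑ x ∈ u.powerset.filter (fun x => x.Nonempty), (-1 : ℝ) ^ (x.card - 1) = 1 := by
  have h0 : ∑ x ∈ u.powerset, (-1 : ℝ) ^ x.card = 0 := by
    have := Finset.sum_powerset_neg_one_pow_card_of_nonempty hu
    have h' := congrArg (fun z : ℤ => (z : ℝ)) this
    push_cast at h'
    exact h'
  have hsplit := Finset.sum_filter_add_sum_filter_not u.powerset
    (fun x => x.Nonempty) (fun x => (-1 : ℝ) ^ x.card)
  rw [h0] at hsplit
  have h2 : ∑ x ∈ u.powerset.filter (fun x => ¬x.Nonempty), (-1 : ℝ) ^ x.card = 1 := by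
    have he : u.powerset.filter (fun x => ¬x.Nonempty) = {∅} := by
      ext x
      simp [Finset.not_nonempty_iff_eq_empty]
      rintro rfl; exact Finset.empty_subset u
    rw [he]; simp
  have h1 : ∑ x ∈ u.powerset.filter (fun x => x.Nonempty), (-1 : ℝ) ^ x.card = -1 := by
    linarith
  have hrw : ∑ x ∈ u.powerset.filter (fun x => x.Nonempty), (-1 : ℝ) ^ (x.card - 1)
      = ∑ x ∈ u.powerset.filter (fun x => x.Nonempty), -((-1 : ℝ) ^ x.card) := by
    apply Finset.sum_congr rfl
    intro x hx
    have hxne : x.Nonempty := (Finset.mem_filter.mp hx).2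
    have hc : 1 ≤ x.card := Finset.card_pos.mpr hxne
    have hcc : x.card = (x.card - 1) + 1 := by omega
    conv_rhs => rw [hcc]
    rw [pow_succ]
    ring
  rw [hrw, Finset.sum_neg_distrib, h1]; norm_num

theorem stmt_12 (G : Finset (Finset ℕ)) (hne : ∀ x ∈ G, x.Nonempty)
    (hclosed : ∀ x ∈ G, ∀ y ⊆ x, y.Nonempty → y ∈ G)
    (h : Finset ℕ → ℝ)
    (ω : Finset ℕ → ℝ) (hω : ∀ u, ω u = (-1 : ℝ) ^ (u.card - 1)) :
    (∑ x ∈ G, ω x * (ω x * ω x * ∑ u ∈ G.filter (fun u => x ⊆ u), h u))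
      = ∑ x ∈ G, h x := by
  have hsq : ∀ x, ω x * ω x = 1 := by
    intro x
    rw [hω, ← pow_add]
    exact Even.neg_one_pow ⟨_, rfl⟩
  have step1 : (∑ x ∈ G, ω x * (ω x * ω x * ∑ u ∈ G.filter (fun u => x ⊆ u), h u))
      = ∑ x ∈ G, ∑ u ∈ G.filter (fun u => x ⊆ u), ω x * h u := by
    apply Finset.sum_congr rfl
    intro x _
    rw [hsq x, one_mul, Finset.mul_sum]
  rw [step1]
  have step2 : (∑ x ∈ G, ∑ u ∈ G.filter (fun u => x ⊆ u), ω x * h u)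
      = ∑ u ∈ G, ∑ x ∈ G.filter (fun x => x ⊆ u), ω x * h u := by
    simp only [Finset.sum_filter]
    rw [Finset.sum_comm]
  rw [step2]
  apply Finset.sum_congr rfl
  intro u hu
  have hfe : G.filter (fun x => x ⊆ u) = u.powerset.filter (fun x => x.Nonempty) := by
    ext x
    simp only [Finset.mem_filter, Finset.mem_powerset]
    constructor
    · rintro ⟨hxG, hxu⟩; exact ⟨hxu, hne x hxG⟩
    · rintro ⟨hxu, hxn⟩; exact ⟨hclosed u hu x hxu hxn, hxu⟩
  rw [hfe, ← Finset.sum_mul]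
  have : ∑ x ∈ u.powerset.filter (fun x => x.Nonempty), ω x
      = ∑ x ∈ u.powerset.filter (fun x => x.Nonempty), (-1 : ℝ) ^ (x.card - 1) :=
    Finset.sum_congr rfl (fun x _ => hω x)
  rw [this, aux_inner u (hne u hu), one_mul]
end

section
/- Let G be a finite simplicial complex and h : G → ℝ. Then for every x ∈ G, ω(x)·g(x,x) = Σ_{y∈G} g(x,y), where g(x,y) = ω(x)ω(y) Σ_{u∈G, x⊆u, y⊆u} h(u). Equivalently, Σ_{u∈G, x⊆u} h(u) = Σ_{y∈G} ω(y) Σ_{u∈G, x⊆u, y⊆u} h(u). -/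
open Finset

lemma omega_sum_aux (G : Finset (Finset ℕ)) (hne : ∀ x ∈ G, x.Nonempty)
    (hclosed : ∀ x ∈ G, ∀ y ⊆ x, y.Nonempty → y ∈ G)
    (ω : Finset ℕ → ℝ) (hω : ∀ u, ω u = (-1 : ℝ) ^ (u.card - 1))
    (u : Finset ℕ) (hu : u ∈ G) :
    ∑ y ∈ G.filter (fun y => y ⊆ u), ω y = 1 := by
  have hset : G.filter (fun y => y ⊆ u) = u.powerset.filter (fun y => y.Nonempty) := by
    ext y
    simp only [mem_filter, mem_powerset]
    exact ⟨fun ⟨hy, hs⟩ => ⟨hs, hne y hy⟩, fun ⟨hs, hn⟩ => ⟨hclosed u hu y hs hn, hs⟩⟩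
  rw [hset]
  have key : (∑ m ∈ u.powerset, (-1 : ℝ) ^ m.card) = 0 := by
    have := Finset.sum_powerset_neg_one_pow_card_of_nonempty (hne u hu)
    have := congrArg (Int.cast : ℤ → ℝ) this
    push_cast at this
    exact this
  have split : (∑ m ∈ u.powerset, (-1 : ℝ) ^ m.card)
      = (∑ m ∈ u.powerset.filter (fun y => y.Nonempty), (-1 : ℝ) ^ m.card)
        + (∑ m ∈ u.powerset.filter (fun y => ¬ y.Nonempty), (-1 : ℝ) ^ m.card) := by
    rw [Finset.sum_filter_add_sum_filter_not]
  have hempty : (∑ m ∈ u.powerset.filter (fun y => ¬ y.Nonempty), (-1 : ℝ) ^ m.card) = 1 := by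
    have : u.powerset.filter (fun y => ¬ y.Nonempty) = {∅} := by
      ext m
      simp only [mem_filter, mem_powerset, mem_singleton, Finset.not_nonempty_iff_eq_empty]
      constructor
      · exact fun h => h.2
      · rintro rfl; exact ⟨Finset.empty_subset u, rfl⟩
    rw [this]; simp
  have hnonempty : (∑ m ∈ u.powerset.filter (fun y => y.Nonempty), (-1 : ℝ) ^ m.card) = -1 := by
    rw [split, hempty] at key; linarith
  calc ∑ y ∈ u.powerset.filter (fun y => y.Nonempty), ω y
      = ∑ y ∈ u.powerset.filter (fun y => y.Nonempty), -((-1 : ℝ) ^ y.card) := by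
        refine Finset.sum_congr rfl fun y hy => ?_
        simp only [mem_filter] at hy
        have hc : 1 ≤ y.card := Finset.card_pos.mpr hy.2
        rw [hω]
        have h2 : (y.card - 1) + 1 = y.card := by omega
        calc ((-1:ℝ))^(y.card-1) = -(((-1:ℝ))^(y.card-1) * (-1)) := by ring
          _ = -((-1:ℝ))^(y.card) := by rw [← pow_succ, h2]
    _ = 1 := by rw [Finset.sum_neg_distrib, hnonempty]; norm_num

theorem stmt_13 (G : Finset (Finset ℕ)) (hne : ∀ x ∈ G, x.Nonempty)
    (hclosed : ∀ x ∈ G, ∀ y ⊆ x, y.Nonempty → y ∈ G)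
    (h : Finset ℕ → ℝ)
    (ω : Finset ℕ → ℝ) (hω : ∀ u, ω u = (-1 : ℝ) ^ (u.card - 1))
    (x : Finset ℕ) (hx : x ∈ G) :
    (ω x * (ω x * ω x * ∑ u ∈ G.filter (fun u => x ⊆ u ∧ x ⊆ u), h u)
      = ∑ y ∈ G, ω x * ω y * ∑ u ∈ G.filter (fun u => x ⊆ u ∧ y ⊆ u), h u) ∧
    (∑ u ∈ G.filter (fun u => x ⊆ u), h u
      = ∑ y ∈ G, ω y * ∑ u ∈ G.filter (fun u => x ⊆ u ∧ y ⊆ u), h u) := by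
  have main : (∑ u ∈ G.filter (fun u => x ⊆ u), h u
      = ∑ y ∈ G, ω y * ∑ u ∈ G.filter (fun u => x ⊆ u ∧ y ⊆ u), h u) := by
    have : ∀ y ∈ G, ω y * ∑ u ∈ G.filter (fun u => x ⊆ u ∧ y ⊆ u), h u
        = ∑ u ∈ G.filter (fun u => x ⊆ u), (if y ⊆ u then ω y * h u else 0) := by
      intro y _
      rw [Finset.mul_sum, Finset.sum_ite, Finset.sum_const_zero, add_zero,
        Finset.filter_filter]
    rw [Finset.sum_congr rfl this, Finset.sum_comm]
    symm
    refine Finset.sum_congr rfl fun u hu => ?_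
    simp only [mem_filter] at hu
    calc ∑ y ∈ G, (if y ⊆ u then ω y * h u else 0)
        = (∑ y ∈ G.filter (fun y => y ⊆ u), ω y) * h u := by
          rw [Finset.sum_filter, Finset.sum_mul]
          exact Finset.sum_congr rfl fun y _ => by split <;> simp
      _ = h u := by rw [omega_sum_aux G hne hclosed ω hω u hu.1, one_mul]
  have hsq : ω x * ω x = 1 := by
    rw [hω, ← pow_add]
    exact Even.neg_one_pow ⟨_, rfl⟩
  refine ⟨?_, main⟩
  have : ∀ y ∈ G, ω x * ω y * ∑ u ∈ G.filter (fun u => x ⊆ u ∧ y ⊆ u), h u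
      = ω x * (ω y * ∑ u ∈ G.filter (fun u => x ⊆ u ∧ y ⊆ u), h u) := fun y _ => by ring
  rw [Finset.sum_congr rfl this, ← Finset.mul_sum, ← main, hsq, one_mul]
  congr 1
  exact Finset.sum_congr (by apply Finset.filter_congr; tauto) fun _ _ => rfl
end

section
/- Let G be a finite simplicial complex and take the topological energy h(x) = ω(x) = (−1)^(|x|−1). Then Σ_{x,y∈G} g(x,y) = χ(G), where g(x,y) = ω(x)ω(y) Σ_{u∈G, x⊆u, y⊆u} ω(u) and χ(G) = Σ_{x∈G} (−1)^(|x|−1) is the Euler characteristic. -/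
theorem stmt_14 (G : Finset (Finset ℕ)) (hne : ∀ x ∈ G, x.Nonempty)
    (hclosed : ∀ x ∈ G, ∀ y ⊆ x, y.Nonempty → y ∈ G)
    (ω : Finset ℕ → ℝ) (hω : ∀ u, ω u = (-1 : ℝ) ^ (u.card - 1)) :
    (∑ x ∈ G, ∑ y ∈ G, ω x * ω y * ∑ u ∈ G.filter (fun u => x ⊆ u ∧ y ⊆ u), ω u)
      = ∑ x ∈ G, ω x := by
  have key : ∀ u ∈ G, ∑ x ∈ G.filter (fun x => x ⊆ u), ω x = 1 := by
    intro u hu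
    have hfe : G.filter (fun x => x ⊆ u) = u.powerset.filter Finset.Nonempty := by
      ext x
      simp only [Finset.mem_filter, Finset.mem_powerset]
      exact ⟨fun ⟨hx, hxu⟩ => ⟨hxu, hne x hx⟩,
             fun ⟨hxu, hxn⟩ => ⟨hclosed u hu x hxu hxn, hxu⟩⟩
    rw [hfe]
    have h0 : ∑ x ∈ u.powerset, (-1:ℝ)^x.card = 0 := by
      have := Finset.sum_powerset_neg_one_pow_card_of_nonempty (hne u hu)
      exact_mod_cast this
    have herase : u.powerset.filter Finset.Nonempty = u.powerset.erase ∅ := by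
      ext x
      simp [Finset.mem_filter, Finset.mem_erase, Finset.nonempty_iff_ne_empty, and_comm]
    have h1 : ∑ x ∈ u.powerset.filter Finset.Nonempty, (-1:ℝ)^x.card = -1 := by
      rw [herase, Finset.sum_erase_eq_sub (Finset.empty_mem_powerset u), h0]
      simp
    have h2 : ∀ x ∈ u.powerset.filter Finset.Nonempty, ω x = -(-1:ℝ)^x.card := by
      intro x hx
      have hxn : x.Nonempty := (Finset.mem_filter.mp hx).2
      have hc : 1 ≤ x.card := Finset.card_pos.mpr hxn
      rw [hω]
      have h3 : (-1:ℝ)^x.card = (-1)^(x.card-1+1) := by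
        rw [Nat.sub_add_cancel hc]
      rw [h3, pow_succ]
      ring
    rw [Finset.sum_congr rfl h2, Finset.sum_neg_distrib, h1]
    norm_num
  calc (∑ x ∈ G, ∑ y ∈ G, ω x * ω y * ∑ u ∈ G.filter (fun u => x ⊆ u ∧ y ⊆ u), ω u)
      = ∑ x ∈ G, ∑ y ∈ G, ∑ u ∈ G, if x ⊆ u ∧ y ⊆ u then ω x * ω y * ω u else 0 := by
        refine Finset.sum_congr rfl fun x _ => Finset.sum_congr rfl fun y _ => ?_
        rw [Finset.mul_sum, Finset.sum_filter]
    _ = ∑ u ∈ G, ∑ x ∈ G, ∑ y ∈ G, if x ⊆ u ∧ y ⊆ u then ω x * ω y * ω u else 0 := by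
        rw [show (∑ x ∈ G, ∑ y ∈ G, ∑ u ∈ G, if x ⊆ u ∧ y ⊆ u then ω x * ω y * ω u else 0)
            = ∑ x ∈ G, ∑ u ∈ G, ∑ y ∈ G, if x ⊆ u ∧ y ⊆ u then ω x * ω y * ω u else 0
          from Finset.sum_congr rfl fun x _ => Finset.sum_comm]
        exact Finset.sum_comm
    _ = ∑ u ∈ G, (∑ x ∈ G.filter (fun x => x ⊆ u), ω x) *
          ((∑ y ∈ G.filter (fun y => y ⊆ u), ω y) * ω u) := by
        refine Finset.sum_congr rfl fun u _ => ?_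
        rw [Finset.sum_mul, Finset.sum_filter]
        refine Finset.sum_congr rfl fun x _ => ?_
        by_cases hx : x ⊆ u
        · simp only [hx, if_true, true_and, Finset.sum_mul, Finset.sum_filter,
            Finset.mul_sum]
          refine Finset.sum_congr rfl fun y _ => ?_
          split <;> simp [mul_assoc]
        · simp [hx]
    _ = ∑ u ∈ G, ω u := by
        refine Finset.sum_congr rfl fun u hu => ?_
        rw [key u hu]
        ring
end

section
/- Let G be a finite set of finite nonempty sets with constant energy h = 1. Then the matrices L^{--}(x,y) = |{u ∈ G : u ⊆ x and u ⊆ y}| and L^{++}(x,y) = |{u ∈ G : x ⊆ u and y ⊆ u}| have the same characteristic polynomial (they are isospectral). -/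
open Polynomial Matrix

lemma charpoly_mul_comm' {m : Type*} [Fintype m] [DecidableEq m]
    (A B : Matrix m m ℤ) : (A * B).charpoly = (B * A).charpoly := by
  have hrev : (A * B).charpolyRev = (B * A).charpolyRev := by
    unfold Matrix.charpolyRev
    have h1 : (X : ℤ[X]) • (A * B).map C = ((X : ℤ[X]) • A.map C) * B.map C := by
      rw [Matrix.map_mul, Matrix.smul_mul]
    have h2 : (X : ℤ[X]) • (B * A).map C = B.map C * ((X : ℤ[X]) • A.map C) := by
      rw [Matrix.map_mul, Matrix.mul_smul]
    rw [h1, h2, Matrix.det_one_sub_mul_comm]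
  have h1 : (A * B).charpoly.reverse = (B * A).charpoly.reverse := by
    rw [Matrix.reverse_charpoly, Matrix.reverse_charpoly, hrev]
  have hd1 : (A * B).charpoly.natDegree = Fintype.card m :=
    Matrix.charpoly_natDegree_eq_dim _
  have hd2 : (B * A).charpoly.natDegree = Fintype.card m :=
    Matrix.charpoly_natDegree_eq_dim _
  ext i
  rcases le_or_gt i (Fintype.card m) with hi | hi
  · have := congrArg (fun p => Polynomial.coeff p (Fintype.card m - i)) h1
    simpa [Polynomial.coeff_reverse, hd1, hd2,
      Polynomial.revAt_le (Nat.sub_le _ _), Nat.sub_sub_self hi] using this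
  · rw [Polynomial.coeff_eq_zero_of_natDegree_lt (hd1 ▸ hi),
      Polynomial.coeff_eq_zero_of_natDegree_lt (hd2 ▸ hi)]

theorem stmt_15 (G : Finset (Finset ℕ)) (hne : ∀ x ∈ G, x.Nonempty)
    (Lmm Lpp : Matrix {x // x ∈ G} {x // x ∈ G} ℤ)
    (hLmm : ∀ x y, Lmm x y = ((G.filter (fun u => u ⊆ x.1 ∧ u ⊆ y.1)).card : ℤ))
    (hLpp : ∀ x y, Lpp x y = ((G.filter (fun u => x.1 ⊆ u ∧ y.1 ⊆ u)).card : ℤ)) :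
    Lmm.charpoly = Lpp.charpoly := by
  classical
  set A : Matrix {x // x ∈ G} {x // x ∈ G} ℤ :=
    Matrix.of (fun x u => if u.1 ⊆ x.1 then (1 : ℤ) else 0) with hA
  have key : ∀ (x y : {x // x ∈ G}) (p : Finset ℕ → Finset ℕ → Finset ℕ → Prop)
      [∀ a b c, Decidable (p a b c)],
      (∑ u : {x // x ∈ G}, (if p u.1 x.1 x.1 then (1:ℤ) else 0) *
        (if p u.1 y.1 y.1 then (1:ℤ) else 0)) =
      ((G.filter (fun u => p u x.1 x.1 ∧ p u y.1 y.1)).card : ℤ) := by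
    intro x y p _
    rw [Finset.univ_eq_attach, ← Finset.sum_boole]
    rw [← Finset.sum_attach G (fun u => if p u x.1 x.1 ∧ p u y.1 y.1 then (1:ℤ) else 0)]
    refine Finset.sum_congr rfl fun u _ => ?_
    by_cases h1 : p u.1 x.1 x.1 <;> by_cases h2 : p u.1 y.1 y.1 <;> simp [h1, h2]
  have hmm : Lmm = A * A.transpose := by
    ext x y
    rw [hLmm, Matrix.mul_apply]
    have := key x y (fun u a _ => u ⊆ a)
    simpa [hA, Matrix.transpose_apply] using this.symm
  have hpp : Lpp = A.transpose * A := by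
    ext x y
    rw [hLpp, Matrix.mul_apply]
    have := key x y (fun u a _ => a ⊆ u)
    simpa [hA, Matrix.transpose_apply] using this.symm
  rw [hmm, hpp, _root_.charpoly_mul_comm']
end

section
/- Let G be a finite simplicial complex and t ∈ ℝ. Define g_t(x,y) = ω(x)ω(y)·(−Σ_{u∈G, x⊆u, y⊆u} t^{|u|}). Then Σ_{x,y∈G} g_t(x,y) = −Σ_{u∈G} t^{|u|} = 1 − f_G(t), where f_G(t) = 1 + Σ_{u∈G} t^{|u|}. -/
theorem stmt_18 (G : Finset (Finset ℕ)) (hne : ∀ x ∈ G, x.Nonempty)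
    (hclosed : ∀ x ∈ G, ∀ y ⊆ x, y.Nonempty → y ∈ G)
    (t : ℝ)
    (ω : Finset ℕ → ℝ) (hω : ∀ u, ω u = (-1 : ℝ) ^ (u.card - 1)) :
    (∑ x ∈ G, ∑ y ∈ G, ω x * ω y *
        (-(∑ u ∈ G.filter (fun u => x ⊆ u ∧ y ⊆ u), t ^ u.card)))
      = -(∑ u ∈ G, t ^ u.card) := by
  classical
  have key : ∀ u ∈ G, ∑ x ∈ G.filter (fun x => x ⊆ u), ω x = 1 := by
    intro u hu
    have hset : G.filter (fun x => x ⊆ u) = u.powerset.filter (fun x => x.Nonempty) := by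
      ext x
      simp only [Finset.mem_filter, Finset.mem_powerset]
      exact ⟨fun ⟨hx, hs⟩ => ⟨hs, hne x hx⟩, fun ⟨hs, hx⟩ => ⟨hclosed u hu x hs hx, hs⟩⟩
    rw [hset]
    have h0 : ∑ x ∈ u.powerset, (-1 : ℝ) ^ x.card = 0 := by
      have := Finset.sum_powerset_neg_one_pow_card_of_nonempty (hne u hu)
      have := congrArg (fun z : ℤ => (z : ℝ)) this
      push_cast at this
      simpa using this
    have hsplit : ∑ x ∈ u.powerset, (-1 : ℝ) ^ x.card
        = (∑ x ∈ u.powerset.filter (fun x => x.Nonempty), (-1 : ℝ) ^ x.card) + 1 := by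
      rw [← Finset.sum_filter_add_sum_filter_not u.powerset (fun x => x.Nonempty)]
      congr 1
      have : u.powerset.filter (fun x => ¬x.Nonempty) = {∅} := by
        ext x
        simp only [Finset.mem_filter, Finset.mem_powerset,
          Finset.not_nonempty_iff_eq_empty, Finset.mem_singleton]
        constructor
        · exact fun h => h.2
        · rintro rfl; exact ⟨Finset.empty_subset u, rfl⟩
      rw [this]
      simp
    have h1 : ∑ x ∈ u.powerset.filter (fun x => x.Nonempty), (-1 : ℝ) ^ x.card = -1 := by
      linarith [hsplit ▸ h0]
    calc ∑ x ∈ u.powerset.filter (fun x => x.Nonempty), ω x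
        = ∑ x ∈ u.powerset.filter (fun x => x.Nonempty), (-(-1 : ℝ) ^ x.card) := by
          refine Finset.sum_congr rfl fun x hx => ?_
          obtain ⟨-, hxne⟩ := Finset.mem_filter.mp hx
          have hc : 1 ≤ x.card := Finset.card_pos.mpr hxne
          obtain ⟨k, hk⟩ := Nat.exists_eq_add_of_le hc
          rw [hω, hk]
          have h2 : 1 + k - 1 = k := by omega
          rw [h2, pow_add]
          ring
      _ = -(-1) := by rw [Finset.sum_neg_distrib, h1]
      _ = 1 := by norm_num
  calc (∑ x ∈ G, ∑ y ∈ G, ω x * ω y *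
        (-(∑ u ∈ G.filter (fun u => x ⊆ u ∧ y ⊆ u), t ^ u.card)))
      = ∑ x ∈ G, ∑ y ∈ G, ∑ u ∈ G,
          (-((if x ⊆ u then ω x else 0) * (if y ⊆ u then ω y else 0) * t ^ u.card)) := by
        refine Finset.sum_congr rfl fun x _ => Finset.sum_congr rfl fun y _ => ?_
        rw [Finset.sum_filter, ← Finset.sum_neg_distrib, Finset.mul_sum]
        refine Finset.sum_congr rfl fun u _ => ?_
        by_cases hx : x ⊆ u <;> by_cases hy : y ⊆ u <;> simp [hx, hy]
    _ = ∑ x ∈ G, ∑ u ∈ G, ∑ y ∈ G,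
          (-((if x ⊆ u then ω x else 0) * (if y ⊆ u then ω y else 0) * t ^ u.card)) :=
        Finset.sum_congr rfl fun x _ => Finset.sum_comm
    _ = ∑ u ∈ G, ∑ x ∈ G, ∑ y ∈ G,
          (-((if x ⊆ u then ω x else 0) * (if y ⊆ u then ω y else 0) * t ^ u.card)) :=
        Finset.sum_comm
    _ = ∑ u ∈ G, -(t ^ u.card) := by
        refine Finset.sum_congr rfl fun u hu => ?_
        have expand : ((∑ x ∈ G, if x ⊆ u then ω x else 0) *
              (∑ y ∈ G, if y ⊆ u then ω y else 0)) * t ^ u.card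
            = ∑ x ∈ G, ∑ y ∈ G,
                ((if x ⊆ u then ω x else 0) * (if y ⊆ u then ω y else 0) * t ^ u.card) := by
          rw [Finset.sum_mul_sum, Finset.sum_mul]
          exact Finset.sum_congr rfl fun x _ => by rw [Finset.sum_mul]
        have hstep : ∑ x ∈ G, ∑ y ∈ G,
            (-((if x ⊆ u then ω x else 0) * (if y ⊆ u then ω y else 0) * t ^ u.card))
            = -(((∑ x ∈ G, if x ⊆ u then ω x else 0) *
                (∑ y ∈ G, if y ⊆ u then ω y else 0)) * t ^ u.card) := by
          rw [expand, ← Finset.sum_neg_distrib]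
          exact Finset.sum_congr rfl fun x _ => by rw [← Finset.sum_neg_distrib]
        rw [hstep, ← Finset.sum_filter, key u hu]
        simp
    _ = -(∑ u ∈ G, t ^ u.card) := by rw [Finset.sum_neg_distrib]
end

section
/- Let G be a finite set of finite nonempty sets and t ≠ 0 a real number. Define L_t(x,y) = Σ_{u∈G, u⊆x, u⊆y} t^{|u|}. Then det(L_t) = Π_{x∈G} t^{|x|} = t^{Σ_{x∈G}|x|}. -/
open Matrix


theorem stmt_19 (G : Finset (Finset ℕ)) (hne : ∀ x ∈ G, x.Nonempty)
    (t : ℝ) (ht : t ≠ 0)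
    (L : Matrix {x // x ∈ G} {x // x ∈ G} ℝ)
    (hL : ∀ x y, L x y = ∑ u ∈ G.filter (fun u => u ⊆ x.1 ∧ u ⊆ y.1), t ^ u.card) :
    L.det = ∏ x ∈ G, t ^ x.card ∧ L.det = t ^ (∑ x ∈ G, x.card) := by
  classical
  set M : Matrix {x // x ∈ G} {x // x ∈ G} ℝ :=
    fun u x => if u.1 ⊆ x.1 then 1 else 0 with hM
  have hLfac : L = Mᵀ * (Matrix.diagonal (fun u : {x // x ∈ G} => t ^ u.1.card) * M) := by
    ext x y
    rw [hL]
    conv_rhs => rw [Matrix.mul_apply]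
    simp only [Matrix.diagonal_mul, Matrix.transpose_apply]
    simp only [hM]
    rw [Finset.sum_filter,
      ← Finset.sum_attach G (fun u => if u ⊆ x.1 ∧ u ⊆ y.1 then t ^ u.card else 0)]
    apply Finset.sum_congr rfl
    intro u _
    by_cases h1 : u.1 ⊆ x.1 <;> by_cases h2 : u.1 ⊆ y.1 <;> simp [h1, h2, mul_comm]
  have hMdet : M.det = 1 := by
    have hbt : M.BlockTriangular (fun u : {x // x ∈ G} => u.1.card) := by
      intro i j hij
      simp only [hM]
      rw [if_neg]
      intro hsub
      exact absurd (Finset.card_le_card hsub) (not_le.mpr hij)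
    rw [hbt.det]
    apply Finset.prod_eq_one
    intro a _
    have hblock : M.toSquareBlock (fun u : {x // x ∈ G} => u.1.card) a = 1 := by
      ext i j
      simp only [Matrix.toSquareBlock_def, Matrix.one_apply, Matrix.of_apply]
      simp only [hM]
      by_cases h : i = j
      · simp [h]
      · rw [if_neg h, if_neg]
        intro hsub
        apply h
        have hc : (j.1 : Finset ℕ).card ≤ (i.1 : Finset ℕ).card :=
          le_of_eq (j.2.trans i.2.symm)
        have := Finset.eq_of_subset_of_card_le hsub hc
        exact Subtype.ext (Subtype.ext this)
    rw [hblock, Matrix.det_one]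
  have hprod : L.det = ∏ x ∈ G, t ^ x.card := by
    rw [hLfac, Matrix.det_mul, Matrix.det_mul, Matrix.det_transpose, hMdet,
      Matrix.det_diagonal]
    rw [one_mul, mul_one]
    exact Finset.prod_attach G (fun x => t ^ x.card)
  refine ⟨hprod, ?_⟩
  rw [hprod, ← Finset.prod_pow_eq_pow_sum]
end
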